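/- Let t = 1 − n(b−c)/((n−1)·b), which lies in (0,1), and for each k ∈ {1,…,n−1} let ε_k be the unique solution in (0,1) of Δ₁(ε_k;k) = t (it exists and is unique because Δ₁(·;k) is continuous and strictly decreasing on (0,1) with limits 1 at 0⁺ and 0 at 1⁻). Then ε_{k+1} < ε_k for every k ∈ {1,…,n−2}; that is, 0 < ε_{n−1} < ε_{n−2} < ⋯ < ε_1 < 1: the supremum of mistake rates supporting the evolutionary stability of the conditional cooperative strategy T_k strictly increases as its tolerance increases (as k decreases). -/

import Mathlib

open Finset

/-- `ψ(j,q,ε) = (j choose q)·ε^q·(1−ε)^(j−q)`. -/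
noncomputable def psi (j q : ℕ) (ε : ℝ) : ℝ :=
  (j.choose q : ℝ) * ε ^ q * (1 - ε) ^ (j - q)

/-- The `δ → 1` limit of the continuation factor:
`Δ₁(ε;k) = (1−ε)·ψ(n−1,n−k−1,ε)/Σ_{q=n−k−1}^{n−1} ψ(n−1,q,ε)`. -/
noncomputable def Delta1 (n k : ℕ) (ε : ℝ) : ℝ :=
  (1 - ε) * psi (n - 1) (n - k - 1) ε /
    ∑ q ∈ Icc (n - k - 1) (n - 1), psi (n - 1) q ε

/-- Log-concavity of binomial coefficients, cross-multiplied form. -/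
lemma choose_log_concave {m p r : ℕ} (hpr : p ≤ r) (hr : r + 1 ≤ m) :
    m.choose p * m.choose (r + 1) ≤ m.choose (p + 1) * m.choose r := by
  have h1 := Nat.choose_succ_right_eq m r
  have h2 := Nat.choose_succ_right_eq m p
  have hpos : 0 < (p + 1) * (r + 1) := by positivity
  apply Nat.le_of_mul_le_mul_right _ hpos
  calc m.choose p * m.choose (r + 1) * ((p + 1) * (r + 1))
      = (m.choose (r + 1) * (r + 1)) * m.choose p * (p + 1) := by ring
    _ = (m.choose r * (m - r)) * m.choose p * (p + 1) := by rw [h1]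
    _ = m.choose r * m.choose p * ((m - r) * (p + 1)) := by ring
    _ ≤ m.choose r * m.choose p * ((m - p) * (r + 1)) := by
        apply Nat.mul_le_mul_left
        exact Nat.mul_le_mul (Nat.sub_le_sub_left hpr m) (by omega)
    _ = (m.choose p * (m - p)) * m.choose r * (r + 1) := by ring
    _ = (m.choose (p + 1) * (p + 1)) * m.choose r * (r + 1) := by rw [h2]
    _ = m.choose (p + 1) * m.choose r * ((p + 1) * (r + 1)) := by ring

/-- The normalized denominator sum. -/
noncomputable def Sfun (n k : ℕ) (ε : ℝ) : ℝ :=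
  ∑ i ∈ range (k + 1),
    ((n - 1).choose (n - k - 1 + i) : ℝ) / ((n - 1).choose (n - k - 1)) *
      (ε ^ i / (1 - ε) ^ (i + 1))

lemma Sfun_term_pos {n k : ℕ} (hk : k ≤ n - 1) {ε : ℝ} (hε0 : 0 < ε) (hε1 : ε < 1)
    {i : ℕ} (hi : i ≤ k) :
    0 < ((n - 1).choose (n - k - 1 + i) : ℝ) / ((n - 1).choose (n - k - 1)) *
      (ε ^ i / (1 - ε) ^ (i + 1)) := by
  have h1 : n - k - 1 + i ≤ n - 1 := by omega
  have h2 : n - k - 1 ≤ n - 1 := by omega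
  have c1 : (0 : ℝ) < ((n - 1).choose (n - k - 1 + i) : ℝ) :=
    Nat.cast_pos.mpr (Nat.choose_pos h1)
  have c2 : (0 : ℝ) < ((n - 1).choose (n - k - 1) : ℝ) :=
    Nat.cast_pos.mpr (Nat.choose_pos h2)
  have h1e : (0 : ℝ) < 1 - ε := by linarith
  positivity

lemma Sfun_pos {n k : ℕ} (hk : k ≤ n - 1) {ε : ℝ} (hε0 : 0 < ε) (hε1 : ε < 1) :
    0 < Sfun n k ε := by
  apply Finset.sum_pos
  · intro i hi
    exact Sfun_term_pos hk hε0 hε1 (by simpa using Nat.lt_succ_iff.mp (mem_range.mp hi))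
  · exact nonempty_range_add_one

lemma delta1_eq_one_div (n k : ℕ) (hn : 3 ≤ n) (hk : k ≤ n - 1) {ε : ℝ}
    (hε0 : 0 < ε) (hε1 : ε < 1) :
    Delta1 n k ε = 1 / Sfun n k ε := by
  set m := n - 1 with hm
  set j := n - k - 1 with hj
  have hjm : j + k = m := by omega
  have h1e : (0 : ℝ) < 1 - ε := by linarith
  have hC0 : (0 : ℝ) < (m.choose j : ℝ) := Nat.cast_pos.mpr (Nat.choose_pos (by omega))
  have hpsij : 0 < psi m j ε := by
    unfold psi
    positivity
  have hA : (0 : ℝ) < (1 - ε) * psi m j ε := by positivity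
  have hsum : ∑ q ∈ Icc j m, psi m q ε = Sfun n k ε * ((1 - ε) * psi m j ε) := by
    rw [← Finset.Ico_add_one_right_eq_Icc, Finset.sum_Ico_eq_sum_range]
    have hrange : m + 1 - j = k + 1 := by omega
    rw [hrange, Sfun, Finset.sum_mul]
    apply Finset.sum_congr rfl
    intro i hi
    have hik : i ≤ k := Nat.lt_succ_iff.mp (mem_range.mp hi)
    obtain ⟨d, hd⟩ : ∃ d, k = i + d := ⟨k - i, by omega⟩
    have e1 : m - (j + i) = d := by omega
    have e2 : m - j = i + d := by omega
    unfold psi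
    rw [e1, e2, pow_add ε j i, pow_add (1 - ε) i d]
    simp only [← hm, ← hj]
    field_simp
    ring
  rw [Delta1, ← hm, ← hj, hsum, ← div_div, div_right_comm, div_self (ne_of_gt hA)]

lemma Sfun_mono {n k : ℕ} (hk : k ≤ n - 1) {a a' : ℝ} (ha0 : 0 < a) (haa : a ≤ a')
    (ha1 : a' < 1) : Sfun n k a ≤ Sfun n k a' := by
  apply Finset.sum_le_sum
  intro i hi
  have hC : (0 : ℝ) ≤ ((n - 1).choose (n - k - 1 + i) : ℝ) / ((n - 1).choose (n - k - 1)) := by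
    positivity
  apply mul_le_mul_of_nonneg_left _ hC
  have ha'0 : 0 < a' := lt_of_lt_of_le ha0 haa
  have h1a' : (0:ℝ) < 1 - a' := by linarith
  exact div_le_div₀ (by positivity) (pow_le_pow_left₀ ha0.le haa i)
    (by positivity) (pow_le_pow_left₀ (by linarith) (by linarith) (i + 1))

lemma Sfun_lt {n k : ℕ} (hn : 3 ≤ n) (hk1 : 1 ≤ k) (hk : k ≤ n - 2) {ε : ℝ}
    (hε0 : 0 < ε) (hε1 : ε < 1) : Sfun n k ε < Sfun n (k + 1) ε := by
  set m := n - 1 with hm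
  set j := n - k - 1 with hj
  have hj1 : 1 ≤ j := by omega
  have hj' : n - (k + 1) - 1 = j - 1 := by omega
  have hlast : 0 < ((m.choose (n - (k+1) - 1 + (k + 1)) : ℝ) / (m.choose (n - (k+1) - 1))) *
      (ε ^ (k+1) / (1 - ε) ^ (k + 1 + 1)) :=
    Sfun_term_pos (n := n) (k := k + 1) (by omega) hε0 hε1 (le_refl _)
  have hstep : Sfun n k ε ≤ ∑ i ∈ range (k + 1),
      ((m.choose (n - (k+1) - 1 + i) : ℝ) / (m.choose (n - (k+1) - 1))) *
        (ε ^ i / (1 - ε) ^ (i + 1)) := by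
    apply Finset.sum_le_sum
    intro i hi
    have hik : i ≤ k := Nat.lt_succ_iff.mp (mem_range.mp hi)
    have hx : (0 : ℝ) ≤ ε ^ i / (1 - ε) ^ (i + 1) := by
      have : (0:ℝ) < 1 - ε := by linarith
      positivity
    apply mul_le_mul_of_nonneg_right _ hx
    rw [hj']
    have hc1 : (0 : ℝ) < (m.choose j : ℝ) := Nat.cast_pos.mpr (Nat.choose_pos (by omega))
    have hc2 : (0 : ℝ) < (m.choose (j - 1) : ℝ) := Nat.cast_pos.mpr (Nat.choose_pos (by omega))
    rw [div_le_div_iff₀ hc1 hc2]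
    have key : m.choose (j - 1) * m.choose (j + i) ≤ m.choose j * m.choose (j - 1 + i) := by
      rcases Nat.eq_zero_or_pos i with hi0 | hip
      · subst hi0; simp [Nat.mul_comm]
      · have h1 : j - 1 + i = (j - 1 + (i - 1)) + 1 := by omega
        have h2 : j + i = (j - 1 + (i - 1) + 1) + 1 := by omega
        have := choose_log_concave (m := m) (p := j - 1) (r := j - 1 + (i - 1) + 1)
          (by omega) (by omega)
        calc m.choose (j - 1) * m.choose (j + i)
            = m.choose (j - 1) * m.choose ((j - 1 + (i - 1) + 1) + 1) := by rw [← h2]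
          _ ≤ m.choose (j - 1 + 1) * m.choose (j - 1 + (i - 1) + 1) := by
              have := choose_log_concave (m := m) (p := j - 1) (r := j - 1 + (i - 1) + 1)
                (by omega) (by omega)
              exact this
          _ = m.choose j * m.choose (j - 1 + i) := by
              congr 1
              · congr 1; omega
              · congr 1; omega
    calc ((m.choose (n - k - 1 + i) : ℝ)) * (m.choose (j - 1))
        = ((m.choose (j - 1) * m.choose (j + i) : ℕ) : ℝ) := by
          push_cast; rw [← hj]; ring
      _ ≤ ((m.choose j * m.choose (j - 1 + i) : ℕ) : ℝ) := by exact_mod_cast key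
      _ = (m.choose (j - 1 + i) : ℝ) * (m.choose j) := by push_cast; ring
  calc Sfun n k ε ≤ _ := hstep
    _ < Sfun n (k + 1) ε := by
        have expand : Sfun n (k + 1) ε = ∑ i ∈ range (k + 1 + 1),
            ((n - 1).choose (n - (k+1) - 1 + i) : ℝ) / ((n - 1).choose (n - (k+1) - 1)) *
              (ε ^ i / (1 - ε) ^ (i + 1)) := rfl
        rw [expand]
        conv_rhs => rw [Finset.sum_range_succ]
        rw [← hm]
        linarith [hlast]

theorem critical_error_rates_ordered (n : ℕ) (hn : 3 ≤ n) (b c : ℝ)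
    (hb0 : 0 < b / n) (hbc : b / n < c) (hcb : c < b)
    (εc : ℕ → ℝ)
    (hεc : ∀ k : ℕ, 1 ≤ k → k ≤ n - 1 →
      εc k ∈ Set.Ioo (0 : ℝ) 1 ∧
        Delta1 n k (εc k) = 1 - n * (b - c) / (((n : ℝ) - 1) * b)) :
    (0 < 1 - n * (b - c) / (((n : ℝ) - 1) * b) ∧
      1 - n * (b - c) / (((n : ℝ) - 1) * b) < 1) ∧
    ∀ k : ℕ, 1 ≤ k → k ≤ n - 2 → εc (k + 1) < εc k := by
  have hn3 : (3 : ℝ) ≤ (n : ℝ) := by exact_mod_cast hn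
  have hnpos : (0 : ℝ) < (n : ℝ) := by linarith
  have hb : 0 < b := by
    have := (div_pos_iff.mp hb0)
    rcases this with ⟨h, _⟩ | ⟨_, h⟩
    · exact h
    · linarith
  have hbnc : b < c * n := (div_lt_iff₀ hnpos).mp hbc
  have hden : (0 : ℝ) < ((n : ℝ) - 1) * b := by nlinarith
  have ht1 : 1 - (n : ℝ) * (b - c) / (((n : ℝ) - 1) * b) < 1 := by
    have : 0 < (n : ℝ) * (b - c) / (((n : ℝ) - 1) * b) := by
      apply div_pos _ hden
      nlinarith
    linarith
  have ht0 : 0 < 1 - (n : ℝ) * (b - c) / (((n : ℝ) - 1) * b) := by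
    rw [sub_pos]
    rw [div_lt_one hden]
    nlinarith
  refine ⟨⟨ht0, ht1⟩, ?_⟩
  intro k hk1 hk2
  obtain ⟨⟨hE1a, hE1b⟩, hD1⟩ := hεc k hk1 (by omega)
  obtain ⟨⟨hE2a, hE2b⟩, hD2⟩ := hεc (k + 1) (by omega) (by omega)
  by_contra hcon
  push_neg at hcon
  -- hcon : εc k ≤ εc (k + 1)
  have hS1 := Sfun_pos (n := n) (k := k) (by omega) hE1a hE1b
  have hS2 := Sfun_pos (n := n) (k := k + 1) (by omega) hE2a hE2b
  rw [delta1_eq_one_div n k hn (by omega) hE1a hE1b] at hD1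
  rw [delta1_eq_one_div n (k + 1) hn (by omega) hE2a hE2b] at hD2
  have hmono : Sfun n k (εc k) ≤ Sfun n k (εc (k + 1)) :=
    Sfun_mono (by omega) hE1a hcon hE2b
  have hlt : Sfun n k (εc (k + 1)) < Sfun n (k + 1) (εc (k + 1)) :=
    Sfun_lt hn hk1 hk2 hE2a hE2b
  have : 1 / Sfun n (k + 1) (εc (k + 1)) < 1 / Sfun n k (εc k) := by
    apply one_div_lt_one_div_of_lt hS1
    linarith
  rw [hD1, hD2] at this
  exact lt_irrefl _ this
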